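/- Fix γ > 0, 0 < t ≤ T, and let φ be as above. Then for all (s,x) ∈ [t,T]×[0,∞) and all z ∈ ℝ^d, one has −γ·φ_x(s,x)·|z| + (1/2)·φ_{xx}(s,x)·|z|² + φ_s(s,x) ≥ 0. -/

import Mathlib

noncomputable def phi (γ t s x : ℝ) : ℝ :=
  (x + Real.exp 1) *
    Real.exp (γ * Real.sqrt (2 * s * Real.log (x + Real.exp 1)) +
      γ / 2 * (γ * (s - t) + 2 * Real.sqrt 2 * (Real.sqrt s - Real.sqrt t)))

noncomputable def phix (γ t s x : ℝ) : ℝ :=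
  phi γ t s x * ((γ * Real.sqrt s + Real.sqrt (2 * Real.log (x + Real.exp 1))) /
    ((x + Real.exp 1) * Real.sqrt (2 * Real.log (x + Real.exp 1))))

noncomputable def phixx (γ t s x : ℝ) : ℝ :=
  phi γ t s x * (γ * Real.sqrt s *
      (2 * Real.log (x + Real.exp 1) + γ * Real.sqrt (2 * s * Real.log (x + Real.exp 1)) - 1) /
    ((x + Real.exp 1) ^ 2 * Real.sqrt (2 * Real.log (x + Real.exp 1)) ^ 3))

noncomputable def phis (γ t s x : ℝ) : ℝ :=
  γ * phi γ t s x / 2 *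
    ((Real.sqrt (2 * Real.log (x + Real.exp 1)) + Real.sqrt 2) / Real.sqrt s + γ)

lemma aux_main (γ S R s2 : ℝ) (hγ : 0 < γ) (hS : 0 < S) (hs2 : s2 ^ 2 = 2)
    (h2pos : 0 < s2) (hR : s2 ≤ R) :
    (γ * S + R) ^ 2 * R ≤ (R ^ 2 + γ * (S * R) - 1) * (R + s2 + γ * S) := by
  have hRpos : 0 < R := lt_of_lt_of_le h2pos hR
  have h2R : 2 ≤ s2 * R := by nlinarith
  have h1 : 2 * R ≤ s2 * R * R := by nlinarith
  have h2 : 0 ≤ γ * S * (s2 * R - 1) := by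
    apply mul_nonneg (by positivity); linarith
  nlinarith [hR, h1, h2]

/-- For `γ > 0`, `0 < t ≤ T`, `(s,x) ∈ [t,T]×[0,∞)` and every `z ∈ ℝ^d`:
`−γ·φ_x·|z| + (1/2)·φ_{xx}·|z|² + φ_s ≥ 0`. -/
theorem phi_differential_inequality (d : ℕ) (hd : 0 < d) (γ t T s x : ℝ) (hγ : 0 < γ)
    (ht : 0 < t) (htT : t ≤ T) (hs : s ∈ Set.Icc t T) (hx : 0 ≤ x)
    (z : EuclideanSpace ℝ (Fin d)) :
    0 ≤ -γ * phix γ t s x * ‖z‖ + 1 / 2 * phixx γ t s x * ‖z‖ ^ 2 + phis γ t s x := by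
  have hs0 : 0 < s := lt_of_lt_of_le ht hs.1
  have hE0 : (0:ℝ) < x + Real.exp 1 := by positivity
  have hlog : 1 ≤ Real.log (x + Real.exp 1) := by
    have h := Real.log_le_log (Real.exp_pos 1)
      (show Real.exp 1 ≤ x + Real.exp 1 by linarith)
    rwa [Real.log_exp] at h
  have hP : 0 < phi γ t s x := by unfold phi; positivity
  have hR2 : Real.sqrt (2 * Real.log (x + Real.exp 1)) ^ 2
      = 2 * Real.log (x + Real.exp 1) := Real.sq_sqrt (by linarith)
  have hRge : Real.sqrt 2 ≤ Real.sqrt (2 * Real.log (x + Real.exp 1)) :=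
    Real.sqrt_le_sqrt (by linarith)
  have h20 : (0:ℝ) < Real.sqrt 2 := Real.sqrt_pos.2 two_pos
  have hR0 : 0 < Real.sqrt (2 * Real.log (x + Real.exp 1)) := lt_of_lt_of_le h20 hRge
  have hS0 : 0 < Real.sqrt s := Real.sqrt_pos.2 hs0
  have hSR : Real.sqrt (2 * s * Real.log (x + Real.exp 1))
      = Real.sqrt s * Real.sqrt (2 * Real.log (x + Real.exp 1)) := by
    rw [show 2 * s * Real.log (x + Real.exp 1) = s * (2 * Real.log (x + Real.exp 1)) by ring,
      Real.sqrt_mul hs0.le]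
  set u := ‖z‖ with hu
  have hu0 : 0 ≤ u := norm_nonneg z
  set P := phi γ t s x with hPdef
  set E := x + Real.exp 1 with hEdef
  set R := Real.sqrt (2 * Real.log E) with hRdef
  set S := Real.sqrt s with hSdef
  have hphix : phix γ t s x = P * ((γ * S + R) / (E * R)) := by
    simp only [phix]
    rfl
  have hphixx : phixx γ t s x = P * (γ * S * (R ^ 2 + γ * (S * R) - 1) / (E ^ 2 * R ^ 3)) := by
    simp only [phixx]
    rw [← hEdef, hSR, ← hRdef, ← hSdef, ← hPdef, ← hR2]
  have hphis : phis γ t s x = γ * P / 2 * ((R + Real.sqrt 2) / S + γ) := by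
    simp only [phis]
    rfl
  have hfac : 0 < R ^ 2 + γ * (S * R) - 1 := by
    have h2 : (Real.sqrt 2) ^ 2 = 2 := Real.sq_sqrt two_pos.le
    nlinarith [mul_pos hγ (mul_pos hS0 hR0), hRge, h20]
  have hxxpos : 0 < phixx γ t s x := by
    rw [hphixx]
    apply mul_pos hP
    apply div_pos (mul_pos (mul_pos hγ hS0) hfac) (by positivity)
  have key : γ ^ 2 * phix γ t s x ^ 2 ≤ 2 * phixx γ t s x * phis γ t s x := by
    rw [hphix, hphixx, hphis]
    have e1 : γ ^ 2 * (P * ((γ * S + R) / (E * R))) ^ 2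
        = γ ^ 2 * P ^ 2 / (E ^ 2 * R ^ 2) * (γ * S + R) ^ 2 := by
      field_simp
    have e2 : 2 * (P * (γ * S * (R ^ 2 + γ * (S * R) - 1) / (E ^ 2 * R ^ 3)))
          * (γ * P / 2 * ((R + Real.sqrt 2) / S + γ))
        = γ ^ 2 * P ^ 2 / (E ^ 2 * R ^ 2)
          * ((R ^ 2 + γ * (S * R) - 1) * (R + Real.sqrt 2 + γ * S) / R) := by
      field_simp
    rw [e1, e2]
    apply mul_le_mul_of_nonneg_left _ (by positivity)
    rw [le_div_iff₀ hR0]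
    exact aux_main γ S R (Real.sqrt 2) hγ hS0 (Real.sq_sqrt two_pos.le) h20 hRge
  nlinarith [key, hxxpos, sq_nonneg (phixx γ t s x * u - γ * phix γ t s x), hu0]
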